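/- For every integer z ≥ 2 and every integer q, the characteristic polynomial of the matrix N_z[q] is x^z − 1. -/
import Mathlib


/-! Matrices `N_z[q]`, `M_z`, and block-diagonal sums. -/

/-- The `z × z` integer matrix `N_z[q]`: `(N)_{1,1} = 1`, `(N)_{1,z} = q`,
`(N)_{i,z} = -1` for `2 ≤ i ≤ z`, `(N)_{i,i-1} = 1` for `3 ≤ i ≤ z`, all other entries `0`
(indices here are 1-based; in Lean we use 0-based `Fin z`). -/
def NMat (z : ℕ) (q : ℤ) : Matrix (Fin z) (Fin z) ℤ := fun i j =>
  if (i : ℕ) = 0 then (if (j : ℕ) = 0 then 1 else if (j : ℕ) = z - 1 then q else 0)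
  else ((if (j : ℕ) + 1 = (i : ℕ) ∧ 2 ≤ (i : ℕ) then 1 else 0) +
        (if (j : ℕ) = z - 1 then -1 else 0))

/-- The `z × z` integer matrix `M_z`: `(M)_{1,z} = 1`, `(M)_{i,i-1} = 1` for `2 ≤ i ≤ z`,
all other entries `0`; this is the companion matrix of `x^z - 1`. -/
def MMat (z : ℕ) : Matrix (Fin z) (Fin z) ℤ := fun i j =>
  if ((j : ℕ) + 1 = (i : ℕ)) ∨ ((i : ℕ) = 0 ∧ (j : ℕ) = z - 1) then 1 else 0

/-- Block-diagonal sum of a family of square integer matrices. -/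
def blockDiag {ι : Type*} [DecidableEq ι] {z : ι → ℕ}
    (B : ∀ i, Matrix (Fin (z i)) (Fin (z i)) ℤ) :
    Matrix ((i : ι) × Fin (z i)) ((i : ι) × Fin (z i)) ℤ := fun x y =>
  if h : y.1 = x.1 then B x.1 x.2 (Fin.cast (congrArg z h) y.2) else 0

/-- The index type of the block structure of the matrix `A(q)`:
for each `j : Fin t` there are `(p_j^{r_j}-1)/2` blocks of size `p_j^{r_j}`
(one `N`-block and `(p_j^{r_j}-3)/2` `M`-blocks), and for each pair `j < h` one block of
size `p_j^{r_j} p_h^{r_h}`. -/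
abbrev AIdx (t : ℕ) (p r : Fin t → ℕ) : Type :=
  ((j : Fin t) × Fin ((p j ^ r j - 1) / 2)) ⊕ {x : Fin t × Fin t // x.1 < x.2}

/-- The sizes of the blocks of `A(q)`. -/
def ASize (t : ℕ) (p r : Fin t → ℕ) : AIdx t p r → ℕ
  | .inl x => p x.1 ^ r x.1
  | .inr x => p x.1.1 ^ r x.1.1 * p x.1.2 ^ r x.1.2

/-- The blocks of `A(q)`: for each `j : Fin t` the block `N_{p_j^{r_j}}[q]` followed by
`(p_j^{r_j}-3)/2` copies of `M_{p_j^{r_j}}`, and for each pair `j < h` the block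
`M_{p_j^{r_j} p_h^{r_h}}`. -/
def ABlocks (t : ℕ) (p r : Fin t → ℕ) (q : ℤ) :
    ∀ k : AIdx t p r, Matrix (Fin (ASize t p r k)) (Fin (ASize t p r k)) ℤ
  | .inl x => if (x.2 : ℕ) = 0 then NMat (p x.1 ^ r x.1) q else MMat (p x.1 ^ r x.1)
  | .inr x => MMat (p x.1.1 ^ r x.1.1 * p x.1.2 ^ r x.1.2)

/-- The block-diagonal matrix
`A(q) = ⊕_j (N_{p_j^{r_j}}[q] ⊕ ⊕_h M_{p_j^{r_j}}) ⊕ ⊕_{j<h} M_{p_j^{r_j} p_h^{r_h}}`. -/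
def AMat (t : ℕ) (p r : Fin t → ℕ) (q : ℤ) :
    Matrix ((k : AIdx t p r) × Fin (ASize t p r k))
      ((k : AIdx t p r) × Fin (ASize t p r k)) ℤ :=
  blockDiag (ABlocks t p r q)

section Aux

open Polynomial Matrix Finset

/-- Row-operation matrix used to triangularize the characteristic matrix of `NMat`. -/
noncomputable def Umat (z : ℕ) : Matrix (Fin z) (Fin z) (Polynomial ℤ) := fun i k =>
  if (i : ℕ) = 0 then (if (k : ℕ) = 0 then 1 else 0)
  else if 1 ≤ (k : ℕ) ∧ (k : ℕ) ≤ (i : ℕ) then X ^ ((k : ℕ) - 1) else 0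

/-- The upper-triangular matrix `Umat z * charmatrix (NMat z q)`. -/
noncomputable def Tmat (z : ℕ) (q : ℤ) : Matrix (Fin z) (Fin z) (Polynomial ℤ) := fun i j =>
  if (i : ℕ) = 0 then
    (if (j : ℕ) = 0 then X - 1 else if (j : ℕ) = z - 1 then -(C q) else 0)
  else (if (j : ℕ) = (i : ℕ) then X ^ (i : ℕ) else 0)
    + (if (j : ℕ) = z - 1 then ∑ k ∈ Finset.range (i : ℕ), X ^ k else 0)

lemma charN (z : ℕ) (hz : 2 ≤ z) (q : ℤ) (k j : Fin z) :
    charmatrix (NMat z q) k j =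
      if (k : ℕ) = 0 then
        (if (j : ℕ) = 0 then X - 1 else if (j : ℕ) = z - 1 then -(C q) else 0)
      else ((if (j : ℕ) = (k : ℕ) then X else 0)
        - (if (j : ℕ) + 1 = (k : ℕ) ∧ 2 ≤ (k : ℕ) then 1 else 0)
        + (if (j : ℕ) = z - 1 then 1 else 0)) := by
  rcases eq_or_ne k j with rfl | hne
  · rw [charmatrix_apply_eq]
    unfold NMat
    split_ifs <;> simp_all <;> omega
  · rw [charmatrix_apply_ne _ _ _ hne]
    have hkj : (k : ℕ) ≠ (j : ℕ) := fun h => hne (Fin.ext h)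
    unfold NMat
    split_ifs <;> simp_all <;> omega

lemma rangeSum (z : ℕ) (q : ℤ) (i j : Fin z) :
    (∑ m ∈ Finset.range z,
      (if (i : ℕ) = 0 then (if m = 0 then 1 else 0)
        else if 1 ≤ m ∧ m ≤ (i : ℕ) then X ^ (m - 1) else (0 : Polynomial ℤ)) *
      (if m = 0 then
        (if (j : ℕ) = 0 then X - 1 else if (j : ℕ) = z - 1 then -(C q) else 0)
      else ((if (j : ℕ) = m then X else 0)
        - (if (j : ℕ) + 1 = m ∧ 2 ≤ m then 1 else 0)
        + (if (j : ℕ) = z - 1 then 1 else 0)))) = Tmat z q i j := by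
  have hiz : (i : ℕ) < z := i.isLt
  have hjz : (j : ℕ) < z := j.isLt
  by_cases hi : (i : ℕ) = 0
  · simp only [hi, if_true]
    have : ∀ m ∈ Finset.range z, ((if m = 0 then (1 : Polynomial ℤ) else 0) *
        (if m = 0 then
          (if (j : ℕ) = 0 then X - 1 else if (j : ℕ) = z - 1 then -(C q) else 0)
        else ((if (j : ℕ) = m then X else 0)
          - (if (j : ℕ) + 1 = m ∧ 2 ≤ m then 1 else 0)
          + (if (j : ℕ) = z - 1 then 1 else 0)))) =
        if m = 0 then
          (if (j : ℕ) = 0 then X - 1 else if (j : ℕ) = z - 1 then -(C q) else 0) else 0 := by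
      intro m _
      split_ifs <;> simp
    rw [Finset.sum_congr rfl this, Finset.sum_ite_eq' (Finset.range z) 0]
    simp only [Finset.mem_range, Tmat, hi, if_true]
    rw [if_pos (by omega)]
  · simp only [hi, if_false]
    -- split the summand into three pieces
    have split : ∀ m ∈ Finset.range z,
        ((if 1 ≤ m ∧ m ≤ (i : ℕ) then X ^ (m - 1) else (0 : Polynomial ℤ)) *
        (if m = 0 then
          (if (j : ℕ) = 0 then X - 1 else if (j : ℕ) = z - 1 then -(C q) else 0)
        else ((if (j : ℕ) = m then X else 0)
          - (if (j : ℕ) + 1 = m ∧ 2 ≤ m then 1 else 0)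
          + (if (j : ℕ) = z - 1 then 1 else 0)))) =
        (if m = (j : ℕ) then (if 1 ≤ m ∧ m ≤ (i : ℕ) then X ^ (m - 1) * X else 0) else 0)
        - (if m = (j : ℕ) + 1 then (if 2 ≤ m ∧ m ≤ (i : ℕ) then X ^ (m - 1) else 0) else 0)
        + (if (j : ℕ) = z - 1 then (if 1 ≤ m ∧ m ≤ (i : ℕ) then X ^ (m - 1) else 0) else 0) := by
      intro m _
      split_ifs <;> first | omega | (exfalso; omega) | ring1
    rw [Finset.sum_congr rfl split]
    rw [Finset.sum_add_distrib, Finset.sum_sub_distrib,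
      Finset.sum_ite_eq' (Finset.range z) ((j : ℕ)),
      Finset.sum_ite_eq' (Finset.range z) ((j : ℕ) + 1)]
    -- compute the geometric-sum piece
    have geo : (∑ m ∈ Finset.range z, if 1 ≤ m ∧ m ≤ (i : ℕ) then X ^ (m - 1)
        else (0 : Polynomial ℤ)) = ∑ k ∈ Finset.range (i : ℕ), X ^ k := by
      rw [← Finset.sum_filter]
      have hfil : (Finset.range z).filter (fun m => 1 ≤ m ∧ m ≤ (i : ℕ)) =
          Finset.Ico 1 ((i : ℕ) + 1) := by
        ext m
        simp only [Finset.mem_filter, Finset.mem_range, Finset.mem_Ico]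
        omega
      rw [hfil, Finset.sum_Ico_eq_sum_range]
      simp only [Nat.add_sub_cancel]
      exact Finset.sum_congr rfl (fun m _ => by congr 1; omega)
    have geo' : (∑ m ∈ Finset.range z, if (j : ℕ) = z - 1 then
        (if 1 ≤ m ∧ m ≤ (i : ℕ) then X ^ (m - 1) else (0 : Polynomial ℤ)) else 0) =
        if (j : ℕ) = z - 1 then ∑ k ∈ Finset.range (i : ℕ), X ^ k else 0 := by
      by_cases hj : (j : ℕ) = z - 1
      · simp only [hj, if_true]; exact geo
      · simp [hj]
    rw [geo']
    unfold Tmat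
    rw [if_neg hi]
    congr 1
    -- remaining: the two "picked" terms combine to `if j = i then X^i else 0`
    rw [if_pos (Finset.mem_range.mpr hjz)]
    have hX : ∀ a b : ℕ, 1 ≤ a → a = b → X ^ (a - 1) * X = (X : Polynomial ℤ) ^ b := by
      intro a b h1 h2
      rw [← pow_succ]
      congr 1
      omega
    by_cases hji : (j : ℕ) = (i : ℕ)
    · rw [if_pos hji]
      have h1 : 1 ≤ (j : ℕ) ∧ (j : ℕ) ≤ (i : ℕ) := by omega
      rw [if_pos h1]
      have h2 : ((if ((j : ℕ) + 1) ∈ Finset.range z then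
          (if 2 ≤ (j : ℕ) + 1 ∧ (j : ℕ) + 1 ≤ (i : ℕ) then X ^ ((j : ℕ) + 1 - 1) else 0)
          else 0) : Polynomial ℤ) = 0 := by
        split_ifs <;> first | rfl | (exfalso; omega)
      rw [h2, sub_zero, hX _ _ h1.1 hji]
    · rw [if_neg hji]
      by_cases hjlt : 1 ≤ (j : ℕ) ∧ (j : ℕ) < (i : ℕ)
      · have h1 : 1 ≤ (j : ℕ) ∧ (j : ℕ) ≤ (i : ℕ) := by omega
        have hj1z : ((j : ℕ) + 1) ∈ Finset.range z := Finset.mem_range.mpr (by omega)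
        rw [if_pos h1, if_pos hj1z,
          if_pos (by omega : 2 ≤ (j : ℕ) + 1 ∧ (j : ℕ) + 1 ≤ (i : ℕ)),
          hX _ _ h1.1 rfl, Nat.add_sub_cancel, sub_self]
      · have e1 : (if 1 ≤ (j : ℕ) ∧ (j : ℕ) ≤ (i : ℕ) then X ^ ((j : ℕ) - 1) * X
            else (0 : Polynomial ℤ)) = 0 := by
          rw [if_neg (by omega)]
        have e2 : ((if ((j : ℕ) + 1) ∈ Finset.range z then
            (if 2 ≤ (j : ℕ) + 1 ∧ (j : ℕ) + 1 ≤ (i : ℕ) then X ^ ((j : ℕ) + 1 - 1) else 0)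
            else 0) : Polynomial ℤ) = 0 := by
          split_ifs <;> first | rfl | (exfalso; omega)
        rw [e1, e2, sub_zero]

lemma mulUC (z : ℕ) (hz : 2 ≤ z) (q : ℤ) :
    Umat z * charmatrix (NMat z q) = Tmat z q := by
  refine Matrix.ext fun i j => ?_
  rw [Matrix.mul_apply]
  calc (∑ k : Fin z, Umat z i k * charmatrix (NMat z q) k j)
      = ∑ k : Fin z, (fun m : ℕ =>
        (if (i : ℕ) = 0 then (if m = 0 then 1 else 0)
          else if 1 ≤ m ∧ m ≤ (i : ℕ) then X ^ (m - 1) else (0 : Polynomial ℤ)) *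
        (if m = 0 then
          (if (j : ℕ) = 0 then X - 1 else if (j : ℕ) = z - 1 then -(C q) else 0)
        else ((if (j : ℕ) = m then X else 0)
          - (if (j : ℕ) + 1 = m ∧ 2 ≤ m then 1 else 0)
          + (if (j : ℕ) = z - 1 then 1 else 0)))) (k : ℕ) :=
        Finset.sum_congr rfl (fun k _ => by rw [charN z hz q k j]; rfl)
    _ = ∑ m ∈ Finset.range z, (fun m : ℕ =>
        (if (i : ℕ) = 0 then (if m = 0 then 1 else 0)
          else if 1 ≤ m ∧ m ≤ (i : ℕ) then X ^ (m - 1) else (0 : Polynomial ℤ)) *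
        (if m = 0 then
          (if (j : ℕ) = 0 then X - 1 else if (j : ℕ) = z - 1 then -(C q) else 0)
        else ((if (j : ℕ) = m then X else 0)
          - (if (j : ℕ) + 1 = m ∧ 2 ≤ m then 1 else 0)
          + (if (j : ℕ) = z - 1 then 1 else 0)))) m :=
        Fin.sum_univ_eq_sum_range (fun m : ℕ =>
        (if (i : ℕ) = 0 then (if m = 0 then 1 else 0)
          else if 1 ≤ m ∧ m ≤ (i : ℕ) then X ^ (m - 1) else (0 : Polynomial ℤ)) *
        (if m = 0 then
          (if (j : ℕ) = 0 then X - 1 else if (j : ℕ) = z - 1 then -(C q) else 0)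
        else ((if (j : ℕ) = m then X else 0)
          - (if (j : ℕ) + 1 = m ∧ 2 ≤ m then 1 else 0)
          + (if (j : ℕ) = z - 1 then 1 else 0)))) z
    _ = Tmat z q i j := rangeSum z q i j

lemma Tupper (z : ℕ) (q : ℤ) : (Tmat z q).BlockTriangular id := by
  intro i j hij
  have : (j : ℕ) < (i : ℕ) := hij
  unfold Tmat
  have hiz : (i : ℕ) < z := i.isLt
  split_ifs <;> first | omega | simp | rfl

lemma Ulower (z : ℕ) : (Umat z).BlockTriangular OrderDual.toDual := by
  intro i j hij
  have : (i : ℕ) < (j : ℕ) := hij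
  unfold Umat
  split_ifs <;> first | omega | rfl

lemma detU_ne (z : ℕ) : (Umat z).det ≠ 0 := by
  rw [Matrix.det_of_lowerTriangular _ (Ulower z)]
  refine Finset.prod_ne_zero_iff.mpr (fun i _ => ?_)
  unfold Umat
  split_ifs <;> first | exact one_ne_zero | exact pow_ne_zero _ X_ne_zero | omega

end Aux

open Matrix Finset

open Polynomial in
/-- the characteristic polynomial of `N_z[q]` is `x^z - 1`. -/
theorem statement9 (z : ℕ) (hz : 2 ≤ z) (q : ℤ) :
    (NMat z q).charpoly = X ^ z - 1 := by
  classical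
  have hdet : (Umat z).det * (charmatrix (NMat z q)).det = (Tmat z q).det := by
    rw [← Matrix.det_mul, mulUC z hz q]
  have hz1 : 0 < z := by omega
  set i0 : Fin z := ⟨0, hz1⟩ with hi0
  set iL : Fin z := ⟨z - 1, by omega⟩ with hiL
  have hne : i0 ≠ iL := by
    simp only [hi0, hiL, ne_eq, Fin.mk.injEq]
    omega
  have hTdiag : (Tmat z q).det = ∏ i, Tmat z q i i :=
    Matrix.det_of_upperTriangular (Tupper z q)
  have hUdiag : (Umat z).det = ∏ i, Umat z i i :=
    Matrix.det_of_lowerTriangular _ (Ulower z)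
  -- split off i0 and iL from both products
  have hmemL : iL ∈ (Finset.univ.erase i0 : Finset (Fin z)) :=
    Finset.mem_erase.mpr ⟨hne.symm, Finset.mem_univ _⟩
  have key : ∀ f : Fin z → Polynomial ℤ, ∏ i, f i =
      f i0 * (f iL * ∏ i ∈ (Finset.univ.erase i0).erase iL, f i) := by
    intro f
    rw [Finset.mul_prod_erase _ f hmemL, Finset.mul_prod_erase _ f (Finset.mem_univ i0)]
  have hprodT := key (fun i => Tmat z q i i)
  have hprodU := key (fun i => Umat z i i)

  have hT0 : Tmat z q i0 i0 = X - 1 := by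
    unfold Tmat
    simp [hi0]
  have hTL : Tmat z q iL iL = X ^ (z - 1) + ∑ k ∈ Finset.range (z - 1), (X : ℤ[X]) ^ k := by
    unfold Tmat
    rw [if_neg (by simp [hiL]; omega)]
    simp [hiL]
  have hU0 : Umat z i0 i0 = 1 := by
    unfold Umat
    simp [hi0]
  have hvL : (iL : ℕ) = z - 1 := rfl
  have hUL : Umat z iL iL = X ^ (z - 2) := by
    unfold Umat
    rw [if_neg (by rw [hvL]; omega), if_pos (by rw [hvL]; omega)]
    rw [hvL]
    congr 1 <;> omega
  have hS : ∀ i ∈ (Finset.univ.erase i0).erase iL,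
      Tmat z q i i = X ^ (i : ℕ) ∧ Umat z i i = X ^ ((i : ℕ) - 1) ∧
        1 ≤ (i : ℕ) ∧ (i : ℕ) < z - 1 := by
    intro i hi
    obtain ⟨hiL', hi0'⟩ := Finset.mem_erase.mp hi
    have hi0'' := (Finset.mem_erase.mp hi0').1
    have h1 : (i : ℕ) ≠ 0 := fun h => hi0'' (Fin.ext (by simpa [hi0] using h))
    have h2 : (i : ℕ) ≠ z - 1 := fun h => hiL' (Fin.ext (by simpa [hiL] using h))
    have hlt : (i : ℕ) < z := i.isLt
    refine ⟨?_, ?_, by omega, by omega⟩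
    · unfold Tmat
      rw [if_neg h1, if_pos rfl, if_neg h2, add_zero]
    · unfold Umat
      rw [if_neg h1, if_pos (by omega)]
  -- products over the middle set
  have hTmid : ∏ i ∈ (Finset.univ.erase i0).erase iL, Tmat z q i i =
      X ^ (∑ i ∈ (Finset.univ.erase i0).erase iL, (i : ℕ)) := by
    rw [← Finset.prod_pow_eq_pow_sum]
    exact Finset.prod_congr rfl (fun i hi => (hS i hi).1)
  have hUmid : ∏ i ∈ (Finset.univ.erase i0).erase iL, Umat z i i =
      X ^ (∑ i ∈ (Finset.univ.erase i0).erase iL, ((i : ℕ) - 1)) := by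
    rw [← Finset.prod_pow_eq_pow_sum]
    exact Finset.prod_congr rfl (fun i hi => (hS i hi).2.1)
  have hcard : ((Finset.univ.erase i0).erase iL).card = z - 2 := by
    rw [Finset.card_erase_of_mem hmemL, Finset.card_erase_of_mem (Finset.mem_univ i0),
      Finset.card_univ, Fintype.card_fin]
    omega
  have hsum : ∑ i ∈ (Finset.univ.erase i0).erase iL, (i : ℕ) =
      (z - 2) + ∑ i ∈ (Finset.univ.erase i0).erase iL, ((i : ℕ) - 1) := by
    have : ∀ i ∈ (Finset.univ.erase i0).erase iL, (i : ℕ) = ((i : ℕ) - 1) + 1 := by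
      intro i hi
      have := (hS i hi).2.2.1
      omega
    rw [Finset.sum_congr rfl this, Finset.sum_add_distrib, ← Finset.card_eq_sum_ones, hcard]
    omega
  -- now compute det T = det U * (X^z - 1)
  have hgeom : (X - 1) * (X ^ (z - 1) + ∑ k ∈ Finset.range (z - 1), (X : ℤ[X]) ^ k) =
      X ^ z - 1 := by
    have : X ^ (z - 1) + ∑ k ∈ Finset.range (z - 1), (X : ℤ[X]) ^ k =
        ∑ k ∈ Finset.range z, (X : ℤ[X]) ^ k := by
      have hzz : z = (z - 1) + 1 := by omega
      conv_rhs => rw [hzz, Finset.sum_range_succ]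
      ring
    rw [this, mul_comm, geom_sum_mul]
  have hTU : (Tmat z q).det = (Umat z).det * (X ^ z - 1) := by
    rw [hTdiag, hUdiag, hprodT, hprodU, hT0, hTL, hU0, hUL, hTmid, hUmid, hsum,
      pow_add, one_mul]
    rw [← hgeom]
    ring
  have := hdet.trans hTU
  have hfin : (charmatrix (NMat z q)).det = X ^ z - 1 :=
    mul_left_cancel₀ (detU_ne z) this
  rw [Matrix.charpoly]
  exact hfin
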